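/- Special case for uniform variables: let ξ₁ ≤ ξ₂ ≤ ⋯ ≤ ξ_m be the order statistics of m independent random variables uniformly distributed on [0, 1]. Then the random variables η_i = ξ_i / ξ_{i+1} for i = 1, …, m−1, together with ξ_m, are mutually independent, and each η_i has cumulative distribution function x ↦ x^i on [0, 1] (density proportional to x^{i−1}). -/

import Mathlib

open MeasureTheory ProbabilityTheory Set Pointwise

namespace OrdStatAux

noncomputable def unifμ : Measure ℝ := volume.restrict (Set.Icc 0 1)

instance : IsProbabilityMeasure unifμ := by
  constructor
  simp [unifμ, Real.volume_Icc]

lemma unifμ_singleton (c : ℝ) : unifμ {c} = 0 := by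
  simp [unifμ, Measure.restrict_apply]

lemma unifμ_Iic_zero : unifμ (Set.Iic 0) = 0 := by
  rw [unifμ, Measure.restrict_apply measurableSet_Iic]
  have : Set.Iic (0:ℝ) ∩ Set.Icc 0 1 = {0} := by
    ext y; simp only [Set.mem_inter_iff, Set.mem_Iic, Set.mem_Icc, Set.mem_singleton_iff]
    constructor
    · rintro ⟨h1, h2, _⟩; linarith
    · rintro rfl; norm_num
  rw [this]; simp

lemma unifμ_Ioi_one : unifμ (Set.Ioi 1) = 0 := by
  rw [unifμ, Measure.restrict_apply measurableSet_Ioi]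
  have : Set.Ioi (1:ℝ) ∩ Set.Icc 0 1 = ∅ := by
    ext y; simp only [Set.mem_inter_iff, Set.mem_Ioi, Set.mem_Icc, Set.mem_empty_iff_false]
    constructor
    · rintro ⟨h1, _, h3⟩; linarith
    · exact False.elim
  rw [this]; simp

/-- If `f, g` are independent and the law of `g` has no atoms, then a.s. `f ≠ g`. -/
lemma prob_eq_zero_of_indep {Ω : Type*} [MeasureSpace Ω] [IsProbabilityMeasure (ℙ : Measure Ω)]
    {f g : Ω → ℝ} (hf : Measurable f) (hg : Measurable g)
    (hind : IndepFun f g ℙ) (hatom : ∀ y : ℝ, Measure.map g ℙ {y} = 0) :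
    ℙ {ω | f ω = g ω} = 0 := by
  haveI : IsProbabilityMeasure (Measure.map f ℙ) := Measure.isProbabilityMeasure_map hf.aemeasurable
  haveI : IsProbabilityMeasure (Measure.map g ℙ) := Measure.isProbabilityMeasure_map hg.aemeasurable
  have hmap := (indepFun_iff_map_prod_eq_prod_map_map hf.aemeasurable hg.aemeasurable).1 hind
  have hD : MeasurableSet {p : ℝ × ℝ | p.1 = p.2} :=
    measurableSet_eq_fun measurable_fst measurable_snd
  have h1 : ℙ {ω | f ω = g ω} = Measure.map (fun ω => (f ω, g ω)) ℙ {p : ℝ × ℝ | p.1 = p.2} := by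
    rw [Measure.map_apply (hf.prodMk hg) hD]
    rfl
  rw [h1, hmap, Measure.prod_apply hD]
  have : ∀ x : ℝ, (Measure.map g ℙ) (Prod.mk x ⁻¹' {p : ℝ × ℝ | p.1 = p.2}) = 0 := by
    intro x
    have : Prod.mk x ⁻¹' {p : ℝ × ℝ | p.1 = p.2} = {x} := by
      ext y; simp [eq_comm]
    rw [this]; exact hatom x
  have heq : ∀ x : ℝ, (Measure.map g ℙ) {x} = 0 := hatom
  simp only [this]
  simp

/-- the joint law of independent random variables is the product of the laws. -/
lemma map_fun_pi {Ω : Type*} [MeasureSpace Ω] [IsProbabilityMeasure (ℙ : Measure Ω)]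
    {m : ℕ} (ζ : Fin m → Ω → ℝ) (hζmeas : ∀ i, Measurable (ζ i))
    (hζindep : iIndepFun ζ ℙ) :
    Measure.map (fun ω i => ζ i ω) ℙ = Measure.pi (fun i => Measure.map (ζ i) ℙ) := by
  haveI : ∀ i, IsProbabilityMeasure (Measure.map (ζ i) ℙ) :=
    fun i => Measure.isProbabilityMeasure_map (hζmeas i).aemeasurable
  refine (Measure.pi_eq fun s hs => ?_).symm
  rw [Measure.map_apply (measurable_pi_lambda _ hζmeas) (MeasurableSet.univ_pi hs)]
  have hpre : (fun ω i => ζ i ω) ⁻¹' Set.pi Set.univ s = ⋂ i, ζ i ⁻¹' s i := by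
    ext ω; simp [Set.mem_pi]
  rw [hpre]
  have := hζindep.meas_iInter (s := fun i => ζ i ⁻¹' s i)
    (fun i => ⟨s i, hs i, rfl⟩)
  rw [this]
  exact Finset.prod_congr rfl fun i _ => (Measure.map_apply (hζmeas i) (hs i)).symm



noncomputable def piν (m : ℕ) : Measure (Fin m → ℝ) := Measure.pi (fun _ => unifμ)
instance (m : ℕ) : IsProbabilityMeasure (piν m) := by
  constructor
  rw [piν, ← Set.pi_univ Set.univ, Measure.pi_pi]
  simp

/-- permuting coordinates preserves `piν`. -/
lemma piν_map_perm (m : ℕ) (σ : Equiv.Perm (Fin m)) :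
    Measure.map (fun (t : Fin m → ℝ) i => t (σ i)) (piν m) = piν m := by
  have hmeas : Measurable (fun (t : Fin m → ℝ) i => t (σ i)) :=
    measurable_pi_lambda _ (fun i => measurable_pi_apply _)
  refine (Measure.pi_eq fun s hs => ?_).symm
  rw [Measure.map_apply hmeas (MeasurableSet.univ_pi hs)]
  have hpre : (fun (t : Fin m → ℝ) i => t (σ i)) ⁻¹' Set.pi Set.univ s
      = Set.pi Set.univ (fun j => s (σ.symm j)) := by
    ext t
    simp only [Set.mem_preimage, Set.mem_pi, Set.mem_univ, true_implies]
    constructor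
    · intro h j; simpa using h (σ.symm j)
    · intro h i; simpa using h (σ i)
  rw [hpre, piν, Measure.pi_pi]
  exact Fintype.prod_equiv σ.symm (fun j => unifμ (s (σ.symm j))) (fun j => unifμ (s j))
    (fun j => rfl)

/-- `piν` is the restriction of Lebesgue measure to the unit cube. -/
lemma piν_eq_restrict (m : ℕ) :
    piν m = (volume : Measure (Fin m → ℝ)).restrict (Set.pi Set.univ fun _ => Set.Icc 0 1) := by
  refine Measure.pi_eq fun s hs => ?_
  rw [Measure.restrict_apply (MeasurableSet.univ_pi hs)]
  have : Set.pi Set.univ s ∩ Set.pi Set.univ (fun _ => Set.Icc (0:ℝ) 1)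
      = Set.pi Set.univ (fun i => s i ∩ Set.Icc 0 1) := by
    rw [← Set.pi_inter_distrib]
  rw [this, MeasureTheory.volume_pi, Measure.pi_pi]
  exact Finset.prod_congr rfl fun i _ => by
    rw [unifμ, Measure.restrict_apply (hs i)]

/-- cylinder over a point is `piν`-null. -/
lemma piν_eval_eq_const_null (m : ℕ) (i : Fin m) (c : ℝ) :
    piν m {t : Fin m → ℝ | t i = c} = 0 := by
  have : {t : Fin m → ℝ | t i = c} = Set.pi Set.univ (fun j => if j = i then {c} else Set.univ) := by
    ext t
    simp only [Set.mem_setOf_eq, Set.mem_pi, Set.mem_univ, true_implies]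
    constructor
    · intro h j; by_cases hj : j = i <;> simp [hj, h]
    · intro h; simpa using h i
  rw [this, piν, Measure.pi_pi]
  refine Finset.prod_eq_zero (Finset.mem_univ i) ?_
  simp [unifμ, Measure.restrict_apply]


/-- chain condition: `t i ≤ y i * t (i+1)` and `t (n-1) ≤ y (n-1)`. -/
def Cond (n : ℕ) (y t : Fin n → ℝ) : Prop :=
  ∀ i : Fin n, if h : (i : ℕ) + 1 < n then t i ≤ y i * t ⟨(i : ℕ) + 1, h⟩ else t i ≤ y i

def Rset (n : ℕ) (y : Fin n → ℝ) : Set (Fin n → ℝ) :=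
  {t | (∀ i, 0 ≤ t i) ∧ Cond n y t}

lemma measurableSet_Rset (n : ℕ) (y : Fin n → ℝ) : MeasurableSet (Rset n y) := by
  have h1 : MeasurableSet {t : Fin n → ℝ | ∀ i, 0 ≤ t i} := by
    rw [Set.setOf_forall]
    exact MeasurableSet.iInter fun i =>
      measurableSet_le measurable_const (measurable_pi_apply i)
  have h2 : MeasurableSet {t : Fin n → ℝ | Cond n y t} := by
    unfold Cond
    rw [Set.setOf_forall]
    refine MeasurableSet.iInter fun i => ?_
    by_cases h : (i : ℕ) + 1 < n
    · simp only [dif_pos h]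
      exact measurableSet_le (measurable_pi_apply i)
        ((measurable_pi_apply _).const_mul _)
    · simp only [dif_neg h]
      exact measurableSet_le (measurable_pi_apply i) measurable_const
  exact h1.inter h2

lemma vol_Rset : ∀ (n : ℕ) (y : Fin n → ℝ), (∀ i, 0 ≤ y i) →
    (volume : Measure (Fin n → ℝ)) (Rset n y)
      = ENNReal.ofReal ((∏ i, y i ^ ((i : ℕ) + 1)) / (Nat.factorial n)) := by
  intro n
  induction n with
  | zero =>
    intro y _
    have : Rset 0 y = Set.univ := by
      ext t; simp [Rset, Cond]
    rw [this, ← Set.pi_univ Set.univ, volume_pi, Measure.pi_pi]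
    simp
  | succ n ih =>
    intro y hy
    set c := y (Fin.last n) with hc
    set y' : Fin n → ℝ := fun j => y j.castSucc with hy'
    have hy'nonneg : ∀ j, 0 ≤ y' j := fun j => hy _
    have hcnonneg : 0 ≤ c := hy _
    set V := (volume : Measure (Fin n → ℝ)) (Rset n y') with hV
    -- the region, after splitting off the last coordinate
    set T : ℝ → Set (Fin n → ℝ) := fun u =>
      {t | (∀ j, 0 ≤ t j) ∧
        ∀ j : Fin n, if h : (j : ℕ) + 1 < n then t j ≤ y' j * t ⟨(j : ℕ) + 1, h⟩
          else t j ≤ y' j * u} with hT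
    set S : Set (ℝ × (Fin n → ℝ)) := {p | (0 ≤ p.1 ∧ p.1 ≤ c) ∧ p.2 ∈ T p.1} with hS
    have hTmeas : ∀ u, MeasurableSet (T u) := by
      intro u
      have hTu : T u = {t : Fin n → ℝ | ∀ j, 0 ≤ t j} ∩
          {t : Fin n → ℝ | ∀ j : Fin n, if h : (j : ℕ) + 1 < n
            then t j ≤ y' j * t ⟨(j : ℕ) + 1, h⟩ else t j ≤ y' j * u} := rfl
      rw [hTu]
      refine MeasurableSet.inter ?_ ?_
      · rw [Set.setOf_forall]
        exact MeasurableSet.iInter fun j =>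
          measurableSet_le measurable_const (measurable_pi_apply j)
      · rw [Set.setOf_forall]
        refine MeasurableSet.iInter fun j => ?_
        by_cases h : (j : ℕ) + 1 < n
        · simp only [dif_pos h]
          exact measurableSet_le (measurable_pi_apply j)
            ((measurable_pi_apply _).const_mul _)
        · simp only [dif_neg h]
          exact measurableSet_le (measurable_pi_apply j) measurable_const
    have hSmeas : MeasurableSet S := by
      have hSes : S = ({p : ℝ × (Fin n → ℝ) | 0 ≤ p.1} ∩ {p | p.1 ≤ c}) ∩
          ({p : ℝ × (Fin n → ℝ) | ∀ j, 0 ≤ p.2 j} ∩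
            {p | ∀ j : Fin n, if h : (j : ℕ) + 1 < n
              then p.2 j ≤ y' j * p.2 ⟨(j : ℕ) + 1, h⟩ else p.2 j ≤ y' j * p.1}) := by
        ext p
        simp only [hS, hT, Set.mem_setOf_eq, Set.mem_inter_iff]
        try tauto
      rw [hSes]
      refine MeasurableSet.inter ?_ ?_
      · exact (measurableSet_le measurable_const measurable_fst).inter
          (measurableSet_le measurable_fst measurable_const)
      · refine MeasurableSet.inter ?_ ?_
        · rw [Set.setOf_forall]
          exact MeasurableSet.iInter fun j =>
            measurableSet_le measurable_const (measurable_snd.eval (a := j))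
        · rw [Set.setOf_forall]
          refine MeasurableSet.iInter fun j => ?_
          by_cases h : (j : ℕ) + 1 < n
          · simp only [dif_pos h]
            exact measurableSet_le (measurable_snd.eval (a := j))
              ((measurable_snd.eval).const_mul _)
          · simp only [dif_neg h]
            exact measurableSet_le (measurable_snd.eval (a := j))
              (measurable_fst.const_mul _)
    -- membership of a snoc-tuple in the region
    have hsnoc : ∀ (u : ℝ) (t : Fin n → ℝ),
        Fin.snoc t u ∈ Rset (n + 1) y ↔ ((0 ≤ u ∧ u ≤ c) ∧ t ∈ T u) := by
      intro u t
      simp only [Rset, Cond, Set.mem_setOf_eq, hT]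
      constructor
      · rintro ⟨h0, hcond⟩
        have hlast := hcond (Fin.last n)
        rw [dif_neg (by simp)] at hlast
        rw [Fin.snoc_last] at hlast
        refine ⟨⟨by simpa using h0 (Fin.last n), hlast⟩, fun j => by simpa using h0 j.castSucc,
          fun j => ?_⟩
        have hj := hcond j.castSucc
        have hjlt : ((j.castSucc : Fin (n+1)) : ℕ) + 1 < n + 1 := by
          simp only [Fin.coe_castSucc]; omega
        rw [dif_pos hjlt, Fin.snoc_castSucc] at hj
        by_cases h : (j : ℕ) + 1 < n
        · rw [dif_pos h]
          have hidx : (⟨((j.castSucc : Fin (n+1)) : ℕ) + 1, hjlt⟩ : Fin (n + 1))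
              = Fin.castSucc ⟨(j : ℕ) + 1, h⟩ := by
            apply Fin.ext; simp
          rw [hidx, Fin.snoc_castSucc] at hj
          exact hj
        · rw [dif_neg h]
          have hidx : (⟨((j.castSucc : Fin (n+1)) : ℕ) + 1, hjlt⟩ : Fin (n + 1))
              = Fin.last n := by
            apply Fin.ext; simp only [Fin.coe_castSucc, Fin.val_last]; omega
          rw [hidx, Fin.snoc_last] at hj
          exact hj
      · rintro ⟨⟨hu0, huc⟩, h0, hcond⟩
        constructor
        · intro i
          refine Fin.lastCases ?_ ?_ i
          · rw [Fin.snoc_last]; exact hu0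
          · intro j; rw [Fin.snoc_castSucc]; exact h0 j
        · intro i
          refine Fin.lastCases ?_ ?_ i
          · rw [dif_neg (by simp)]
            rw [Fin.snoc_last]
            exact huc
          · intro j
            have hjlt : ((j.castSucc : Fin (n+1)) : ℕ) + 1 < n + 1 := by
              simp only [Fin.coe_castSucc]; omega
            rw [dif_pos hjlt, Fin.snoc_castSucc]
            have hj := hcond j
            by_cases h : (j : ℕ) + 1 < n
            · rw [dif_pos h] at hj
              have hidx : (⟨((j.castSucc : Fin (n+1)) : ℕ) + 1, hjlt⟩ : Fin (n + 1))
                  = Fin.castSucc ⟨(j : ℕ) + 1, h⟩ := by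
                apply Fin.ext; simp
              rw [hidx, Fin.snoc_castSucc]
              exact hj
            · rw [dif_neg h] at hj
              have hidx : (⟨((j.castSucc : Fin (n+1)) : ℕ) + 1, hjlt⟩ : Fin (n + 1))
                  = Fin.last n := by
                apply Fin.ext; simp only [Fin.coe_castSucc, Fin.val_last]; omega
              rw [hidx, Fin.snoc_last]
              exact hj
    -- transfer the measure through the "split off the last coordinate" equivalence
    set e := MeasurableEquiv.piFinSuccAbove (fun _ : Fin (n + 1) => ℝ) (Fin.last n) with he
    have hpre' : e.symm ⁻¹' (Rset (n + 1) y) = S := by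
      ext p
      obtain ⟨u, t⟩ := p
      have happ : e.symm (u, t) = Fin.snoc t u := by
        simp [he, MeasurableEquiv.piFinSuccAbove_symm_apply, Fin.insertNthEquiv,
          Fin.insertNth_last']
      simp only [Set.mem_preimage, happ, hsnoc]
      simp only [hS, Set.mem_setOf_eq]
    have hsplit := measurePreserving_piFinSuccAbove
      (fun _ : Fin (n + 1) => (volume : Measure ℝ)) (Fin.last n)
    have hvol : (volume : Measure (Fin (n + 1) → ℝ)) (Rset (n + 1) y)
        = ((volume : Measure ℝ).prod (volume : Measure (Fin n → ℝ))) S := by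
      rw [← hpre']
      exact ((hsplit.symm e).measure_preimage
        (measurableSet_Rset (n + 1) y).nullMeasurableSet).symm
    rw [hvol, Measure.prod_apply hSmeas]
    -- the slices
    have hind : ∀ u : ℝ, (volume : Measure (Fin n → ℝ)) (Prod.mk u ⁻¹' S)
        = Set.indicator (Set.Icc 0 c) (fun u => (volume : Measure (Fin n → ℝ)) (T u)) u := by
      intro u
      have hpre : Prod.mk u ⁻¹' S = if (0 ≤ u ∧ u ≤ c) then T u else ∅ := by
        split_ifs with h
        · ext t
          simp only [Set.mem_preimage, hS, Set.mem_setOf_eq]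
          exact ⟨fun a => a.2, fun a => ⟨h, a⟩⟩
        · ext t
          simp only [Set.mem_preimage, hS, Set.mem_setOf_eq, Set.mem_empty_iff_false]
          exact ⟨fun a => h a.1, False.elim⟩
      by_cases h : 0 ≤ u ∧ u ≤ c
      · rw [hpre, if_pos h, Set.indicator_of_mem (Set.mem_Icc.2 h)]
      · rw [hpre, if_neg h, Set.indicator_of_notMem (fun hmem => h (Set.mem_Icc.1 hmem))]
        simp
    simp only [hind]
    rw [lintegral_indicator measurableSet_Icc,
      ← Measure.restrict_congr_set Ioc_ae_eq_Icc]
    -- scaling of the slice regions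
    have hTscale : ∀ u : ℝ, 0 < u → T u = u • Rset n y' := by
      intro u hu
      ext t
      rw [Set.mem_smul_set_iff_inv_smul_mem₀ hu.ne']
      have : (u⁻¹ • t ∈ Rset n y') ↔ t ∈ T u := by
        simp only [Rset, Cond, Set.mem_setOf_eq, hT, Pi.smul_apply, smul_eq_mul]
        apply and_congr
        · exact forall_congr' fun j => mul_nonneg_iff_of_pos_left (inv_pos.2 hu)
        · refine forall_congr' fun j => ?_
          by_cases h : (j : ℕ) + 1 < n
          · simp only [dif_pos h]
            rw [show y' j * (u⁻¹ * t ⟨(j : ℕ) + 1, h⟩) = u⁻¹ * (y' j * t ⟨(j : ℕ) + 1, h⟩)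
              by ring]
            exact mul_le_mul_iff_right₀ (inv_pos.2 hu)
          · simp only [dif_neg h]
            rw [inv_mul_le_iff₀ hu, mul_comm u (y' j)]
      rw [this]
    have hTvol : ∀ u : ℝ, u ∈ Set.Ioc 0 c →
        (volume : Measure (Fin n → ℝ)) (T u) = ENNReal.ofReal (u ^ n) * V := by
      intro u hu
      rw [hTscale u hu.1, Measure.addHaar_smul, Module.finrank_fin_fun, hV,
        abs_of_nonneg (pow_nonneg hu.1.le _)]
    rw [setLIntegral_congr_fun measurableSet_Ioc hTvol,
      lintegral_mul_const _ (by fun_prop)]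
    -- the one-dimensional integral
    have hJ : ∫⁻ u in Set.Ioc 0 c, ENNReal.ofReal (u ^ n) ∂volume
        = ENNReal.ofReal (c ^ (n + 1) / (n + 1)) := by
      rw [← ofReal_integral_eq_lintegral_ofReal]
      · congr 1
        rw [← intervalIntegral.integral_of_le hcnonneg, integral_pow]
        simp
      · rw [← IntegrableOn, ← intervalIntegrable_iff_integrableOn_Ioc_of_le hcnonneg]
        exact intervalIntegral.intervalIntegrable_pow n
      · filter_upwards [ae_restrict_mem measurableSet_Ioc] with u hu
        exact pow_nonneg hu.1.le _
    rw [hJ, hV, ih y' hy'nonneg, ← ENNReal.ofReal_mul (by positivity)]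
    congr 1
    rw [Fin.prod_univ_castSucc]
    have hcast : ∀ j : Fin n, y (Fin.castSucc j) ^ (((Fin.castSucc j : Fin (n+1)) : ℕ) + 1)
        = y' j ^ ((j : ℕ) + 1) := by
      intro j; rfl
    simp only [hcast, Fin.val_last, Nat.factorial_succ]
    have hnfac : (0:ℝ) < (Nat.factorial n : ℝ) := by positivity
    field_simp
    rw [← hc]; push_cast; ring


lemma mono_of_adjacent {m : ℕ} {t : Fin m → ℝ}
    (h : ∀ (i : Fin m) (hi : (i : ℕ) + 1 < m), t i ≤ t ⟨(i : ℕ) + 1, hi⟩) :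
    Monotone t := by
  intro a b hab
  obtain ⟨a, ha⟩ := a
  obtain ⟨b, hb⟩ := b
  have hab' : a ≤ b := hab
  have key : ∀ b', a ≤ b' → ∀ hb' : b' < m, t ⟨a, ha⟩ ≤ t ⟨b', hb'⟩ := by
    intro b'
    refine Nat.le_induction ?_ ?_ b'
    · intro _; exact le_rfl
    · intro k hk ih hk1
      have hkm : k < m := by omega
      exact (ih hkm).trans (h ⟨k, hkm⟩ (by simp only [Fin.val_mk]; omega))
  exact key b hab' hb

lemma strictMono_of_adjacent {m : ℕ} {t : Fin m → ℝ}
    (hle : ∀ (i : Fin m) (hi : (i : ℕ) + 1 < m), t i ≤ t ⟨(i : ℕ) + 1, hi⟩)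
    (hne : ∀ (i : Fin m) (hi : (i : ℕ) + 1 < m), t i ≠ t ⟨(i : ℕ) + 1, hi⟩) :
    StrictMono t := by
  intro a b hab
  have h1 : (a : ℕ) + 1 < m := lt_of_le_of_lt (Nat.succ_le_of_lt hab) b.isLt
  have h2 : t a < t ⟨(a : ℕ) + 1, h1⟩ := lt_of_le_of_ne (hle a h1) (hne a h1)
  have h3 : (⟨(a : ℕ) + 1, h1⟩ : Fin m) ≤ b := by
    rw [Fin.le_def]; exact Nat.succ_le_of_lt hab
  exact lt_of_lt_of_le h2 (mono_of_adjacent hle h3)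

lemma hone {m : ℕ} (t : Fin m → ℝ) : (fun i => t ((1 : Equiv.Perm (Fin m)) i)) = t := rfl

lemma key {Ω : Type*} [MeasureSpace Ω] [IsProbabilityMeasure (ℙ : Measure Ω)]
    (m : ℕ) (hm : 0 < m)
    (ζ : Fin m → Ω → ℝ) (hζmeas : ∀ i, Measurable (ζ i))
    (hζindep : iIndepFun ζ ℙ)
    (hζunif : ∀ i, Measure.map (ζ i) ℙ = (volume : Measure ℝ).restrict (Set.Icc (0 : ℝ) 1))
    (ξ : Fin m → Ω → ℝ)
    (hξsort : ∀ᵐ ω ∂(ℙ : Measure Ω), Monotone (fun i => ξ i ω) ∧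
      ∃ σ : Equiv.Perm (Fin m), ∀ i, ξ i ω = ζ (σ i) ω)
    (g : Fin m → Ω → ℝ)
    (hg : ∀ (i : Fin m) ω, g i ω =
      if h : (i : ℕ) + 1 < m then ξ i ω / ξ ⟨(i : ℕ) + 1, h⟩ ω else ξ i ω)
    (x : Fin m → ℝ) (hx : ∀ i, x i ∈ Set.Icc (0:ℝ) 1) :
    ℙ {ω | ∀ i, g i ω ≤ x i} = ∏ i, ENNReal.ofReal (x i ^ ((i : ℕ) + 1)) := by
  classical
  set Z : Ω → (Fin m → ℝ) := fun ω i => ζ i ω with hZ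
  have hZmeas : Measurable Z := measurable_pi_lambda _ hζmeas
  have hmapZ : Measure.map Z ℙ = piν m := by
    rw [map_fun_pi ζ hζmeas hζindep]
    unfold piν
    congr 1
    funext i
    rw [hζunif i]
    rfl
  set A : Equiv.Perm (Fin m) → Set (Fin m → ℝ) := fun σ =>
    {t | (∀ i, 0 < t i) ∧ Function.Injective t ∧ Monotone (fun i => t (σ i)) ∧
      Cond m x (fun i => t (σ i))} with hA
  have hAmeas : ∀ σ, MeasurableSet (A σ) := by
    intro σ
    have e1 : MeasurableSet {t : Fin m → ℝ | ∀ i, 0 < t i} := by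
      rw [Set.setOf_forall]
      exact MeasurableSet.iInter fun i =>
        measurableSet_lt measurable_const (measurable_pi_apply i)
    have e2 : MeasurableSet {t : Fin m → ℝ | Function.Injective t} := by
      have h2 : {t : Fin m → ℝ | Function.Injective t}
          = ⋂ (i) (j) (_ : i ≠ j), {t : Fin m → ℝ | t i ≠ t j} := by
        ext t
        simp only [Set.mem_setOf_eq, Set.mem_iInter]
        constructor
        · intro h i j hij he
          exact hij (h he)
        · intro h a b hab
          by_contra hne
          exact h a b hne hab
      rw [h2]
      exact MeasurableSet.iInter fun i => MeasurableSet.iInter fun j =>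
        MeasurableSet.iInter fun _ =>
          (measurableSet_eq_fun (measurable_pi_apply i) (measurable_pi_apply j)).compl
    have e3 : MeasurableSet {t : Fin m → ℝ | Monotone (fun i => t (σ i))} := by
      have h3 : {t : Fin m → ℝ | Monotone (fun i => t (σ i))}
          = ⋂ (i) (j) (_ : i ≤ j), {t : Fin m → ℝ | t (σ i) ≤ t (σ j)} := by
        ext t
        simp only [Set.mem_setOf_eq, Set.mem_iInter]
        exact ⟨fun h i j hij => h hij, fun h a b hab => h a b hab⟩
      rw [h3]
      exact MeasurableSet.iInter fun i => MeasurableSet.iInter fun j =>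
        MeasurableSet.iInter fun _ =>
          measurableSet_le (measurable_pi_apply _) (measurable_pi_apply _)
    have e4 : MeasurableSet {t : Fin m → ℝ | Cond m x (fun i => t (σ i))} := by
      unfold Cond
      rw [Set.setOf_forall]
      refine MeasurableSet.iInter fun i => ?_
      by_cases h : (i : ℕ) + 1 < m
      · simp only [dif_pos h]
        exact measurableSet_le (measurable_pi_apply _) ((measurable_pi_apply _).const_mul _)
      · simp only [dif_neg h]
        exact measurableSet_le (measurable_pi_apply _) measurable_const
    exact e1.inter (e2.inter (e3.inter e4))
  have hνA : ∀ σ : Equiv.Perm (Fin m), piν m (A σ) = piν m (A 1) := by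
    intro σ
    have hP : Measurable (fun (t : Fin m → ℝ) i => t (σ i)) :=
      measurable_pi_lambda _ fun i => measurable_pi_apply _
    have hpre : A σ = (fun (t : Fin m → ℝ) i => t (σ i)) ⁻¹' (A 1) := by
      ext t
      simp only [hA, Set.mem_preimage, Set.mem_setOf_eq, Equiv.Perm.coe_one, id_eq]
      constructor
      · rintro ⟨h1, h2, h3, h4⟩
        exact ⟨fun i => h1 (σ i), h2.comp σ.injective, h3, h4⟩
      · rintro ⟨h1, h2, h3, h4⟩
        refine ⟨fun i => by simpa using h1 (σ.symm i), ?_, h3, h4⟩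
        have h2' : Function.Injective ((fun i => t (σ i)) ∘ ⇑σ.symm) :=
          h2.comp σ.symm.injective
        have heq : ((fun i => t (σ i)) ∘ ⇑σ.symm) = t := funext fun i => by simp
        rwa [heq] at h2'
    rw [hpre, ← Measure.map_apply hP (hAmeas 1), piν_map_perm m σ]
  set R : Set (Fin m → ℝ) := Rset m x with hR
  have hx0 : ∀ i, 0 ≤ x i := fun i => (hx i).1
  have hx1 : ∀ i, x i ≤ 1 := fun i => (hx i).2
  have hadj : ∀ t ∈ R, ∀ (i : Fin m) (hi : (i:ℕ)+1 < m), t i ≤ t ⟨(i:ℕ)+1, hi⟩ := by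
    rintro t ⟨h0, hcond⟩ i hi
    have hci := hcond i
    rw [dif_pos hi] at hci
    exact hci.trans (mul_le_of_le_one_left (h0 _) (hx1 i))
  have hlast : ∀ t ∈ R, ∀ i, t i ≤ x ⟨m - 1, by omega⟩ := by
    rintro t ht i
    have hmono := mono_of_adjacent (hadj t ht)
    have hle : t i ≤ t ⟨m - 1, by omega⟩ := by
      apply hmono
      rw [Fin.le_def]
      simp only [Fin.val_mk]
      have := i.isLt
      omega
    have h2 := ht.2 ⟨m - 1, by omega⟩
    rw [dif_neg (by simp only [Fin.val_mk]; omega)] at h2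
    exact hle.trans h2
  have hRsubbox : R ⊆ Set.pi Set.univ (fun _ : Fin m => Set.Icc (0:ℝ) 1) := by
    intro t ht i _
    exact ⟨ht.1 i, (hlast t ht i).trans (hx1 _)⟩
  have hA1subR : A 1 ⊆ R := by
    rintro t ⟨h1, _, _, h4⟩
    rw [hone] at h4
    exact ⟨fun i => (h1 i).le, h4⟩
  have hN2 : ∀ (i j : Fin m), i ≠ j → piν m {t : Fin m → ℝ | t i = t j} = 0 := by
    intro i j hij
    have hmeas : MeasurableSet {t : Fin m → ℝ | t i = t j} :=
      measurableSet_eq_fun (measurable_pi_apply i) (measurable_pi_apply j)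
    rw [← hmapZ, Measure.map_apply hZmeas hmeas]
    have hZpre : Z ⁻¹' {t : Fin m → ℝ | t i = t j} = {ω | ζ i ω = ζ j ω} := rfl
    rw [hZpre]
    exact prob_eq_zero_of_indep (hζmeas i) (hζmeas j) (hζindep.indepFun hij)
      (fun y => by rw [hζunif j]; simp [Measure.restrict_apply])
  have hdiffnull : piν m (R \ A 1) = 0 := by
    have hsub : R \ A 1 ⊆ {t : Fin m → ℝ | t ⟨0, hm⟩ = 0} ∪
        ⋃ (i : Fin m), ⋃ (hi : (i:ℕ)+1 < m), {t : Fin m → ℝ | t i = t ⟨(i:ℕ)+1, hi⟩} := by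
      rintro t ⟨htR, htA⟩
      by_contra hcon
      simp only [Set.mem_union, Set.mem_setOf_eq, Set.mem_iUnion, not_or, not_exists] at hcon
      obtain ⟨hz, hne⟩ := hcon
      apply htA
      have hsm : StrictMono t := strictMono_of_adjacent (hadj t htR) (fun i hi => hne i hi)
      have hmono : Monotone t := hsm.monotone
      have hpos : ∀ i, 0 < t i := by
        intro i
        have h0 : (0:ℝ) ≤ t ⟨0, hm⟩ := htR.1 _
        have hlt : 0 < t ⟨0, hm⟩ := lt_of_le_of_ne h0 (Ne.symm hz)
        exact lt_of_lt_of_le hlt (hmono (by rw [Fin.le_def]; simp only [Fin.val_mk]; omega))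
      refine ⟨hpos, hsm.injective, ?_, ?_⟩
      · rw [hone]; exact hmono
      · rw [hone]; exact htR.2
    refine measure_mono_null hsub (measure_union_null (piν_eval_eq_const_null m _ 0) ?_)
    refine measure_iUnion_null fun i => measure_iUnion_null fun hi => hN2 i _ ?_
    have hvne : (i : ℕ) ≠ ((⟨(i:ℕ)+1, hi⟩ : Fin m) : ℕ) := by
      simp only [Fin.val_mk]; omega
    exact fun he => hvne (congrArg Fin.val he)
  have hνA1R : piν m (A 1) = piν m R := by
    refine le_antisymm (measure_mono hA1subR) ?_
    calc piν m R ≤ piν m (A 1 ∪ (R \ A 1)) := measure_mono (fun t ht => by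
          by_cases h : t ∈ A 1
          · exact Set.mem_union_left _ h
          · exact Set.mem_union_right _ ⟨ht, h⟩)
      _ ≤ piν m (A 1) + piν m (R \ A 1) := measure_union_le _ _
      _ = piν m (A 1) := by rw [hdiffnull, add_zero]
  have hνR : piν m R = ENNReal.ofReal ((∏ i, x i ^ ((i:ℕ)+1)) / (Nat.factorial m)) := by
    rw [piν_eq_restrict, Measure.restrict_apply (measurableSet_Rset m x),
      Set.inter_eq_self_of_subset_left hRsubbox]
    exact vol_Rset m x hx0
  -- almost sure properties on Ω
  have h1 : ∀ i : Fin m, ∀ᵐ ω ∂(ℙ : Measure Ω), 0 < ζ i ω := by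
    intro i
    rw [ae_iff]
    have hset : {ω | ¬ 0 < ζ i ω} = ζ i ⁻¹' (Set.Iic 0) := by ext ω; simp [not_lt]
    rw [hset, ← Measure.map_apply (hζmeas i) measurableSet_Iic, hζunif i]
    exact unifμ_Iic_zero
  have h2 : ∀ i : Fin m, ∀ᵐ ω ∂(ℙ : Measure Ω), ζ i ω ≤ 1 := by
    intro i
    rw [ae_iff]
    have hset : {ω | ¬ ζ i ω ≤ 1} = ζ i ⁻¹' (Set.Ioi 1) := by ext ω; simp [not_le]
    rw [hset, ← Measure.map_apply (hζmeas i) measurableSet_Ioi, hζunif i]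
    exact unifμ_Ioi_one
  have h3 : ∀ᵐ ω ∂(ℙ : Measure Ω), ∀ (i j : Fin m), i ≠ j → ζ i ω ≠ ζ j ω := by
    rw [ae_all_iff]
    intro i
    rw [ae_all_iff]
    intro j
    by_cases hij : i = j
    · subst hij
      filter_upwards with ω
      exact fun h => absurd rfl h
    · have h0 := prob_eq_zero_of_indep (hζmeas i) (hζmeas j) (hζindep.indepFun hij)
        (fun y => by rw [hζunif j]; simp [Measure.restrict_apply])
      rw [ae_iff]
      refine measure_mono_null ?_ h0
      intro ω hω
      simp only [Set.mem_setOf_eq] at hω ⊢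
      by_contra hne
      exact hω (fun _ => hne)
  have hG : ∀ᵐ ω ∂(ℙ : Measure Ω), ((∀ i, 0 < ζ i ω) ∧ (∀ i, ζ i ω ≤ 1)) ∧
      (∀ (i j : Fin m), i ≠ j → ζ i ω ≠ ζ j ω) ∧
      (Monotone (fun i => ξ i ω) ∧ ∃ σ : Equiv.Perm (Fin m), ∀ i, ξ i ω = ζ (σ i) ω) := by
    filter_upwards [ae_all_iff.2 h1, ae_all_iff.2 h2, h3, hξsort] with ω ha hb hc hd
    exact ⟨⟨ha, hb⟩, hc, hd⟩
  -- a.e. identification of the event with the chamber decomposition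
  have hEA : {ω | ∀ i, g i ω ≤ x i} =ᵐ[(ℙ : Measure Ω)]
      (Z ⁻¹' ⋃ σ : Equiv.Perm (Fin m), A σ) := by
    rw [Filter.eventuallyEq_set]
    filter_upwards [hG] with ω hGω
    obtain ⟨⟨hpos, hle1⟩, hdist, hmono, τ, hτ⟩ := hGω
    have hinj : Function.Injective (Z ω) := by
      intro a b hab
      by_contra hne
      exact hdist a b hne hab
    simp only [Set.mem_setOf_eq, Set.mem_preimage, Set.mem_iUnion]
    constructor
    · intro hE
      refine ⟨τ, fun i => hpos i, hinj, ?_, ?_⟩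
      · have hξτ : (fun i => Z ω (τ i)) = fun i => ξ i ω := funext fun i => (hτ i).symm
        rw [hξτ]
        exact hmono
      · intro i
        by_cases hi : (i : ℕ) + 1 < m
        · rw [dif_pos hi]
          have hgi := hE i
          rw [hg i ω, dif_pos hi] at hgi
          have hp : 0 < ξ ⟨(i:ℕ)+1, hi⟩ ω := by rw [hτ]; exact hpos _
          have hle := (div_le_iff₀ hp).1 hgi
          show Z ω (τ i) ≤ x i * Z ω (τ ⟨(i:ℕ)+1, hi⟩)
          rw [show Z ω (τ i) = ξ i ω from (hτ i).symm,
            show Z ω (τ ⟨(i:ℕ)+1, hi⟩) = ξ ⟨(i:ℕ)+1, hi⟩ ω from (hτ _).symm]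
          linarith
        · rw [dif_neg hi]
          have hgi := hE i
          rw [hg i ω, dif_neg hi] at hgi
          show Z ω (τ i) ≤ x i
          rw [show Z ω (τ i) = ξ i ω from (hτ i).symm]
          exact hgi
    · rintro ⟨σ, hσpos, hσinj, hσmono, hσcond⟩
      have huniq : (fun i => Z ω (σ i)) = fun i => Z ω (τ i) := by
        have hm1 : Monotone ((Z ω) ∘ ⇑σ) := hσmono
        have hm2 : Monotone ((Z ω) ∘ ⇑τ) := by
          have : (Z ω) ∘ ⇑τ = fun i => ξ i ω := funext fun i => (hτ i).symm
          rw [this]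
          exact hmono
        exact Tuple.unique_monotone hm1 hm2
      have hξσ : ∀ j, ξ j ω = Z ω (σ j) := by
        intro j
        rw [hτ j]
        exact (congrFun huniq j).symm
      intro i
      have hci := hσcond i
      by_cases hi : (i:ℕ)+1 < m
      · rw [hg i ω, dif_pos hi]
        rw [dif_pos hi] at hci
        have hp : 0 < Z ω (σ ⟨(i:ℕ)+1, hi⟩) := hσpos _
        rw [hξσ i, hξσ ⟨(i:ℕ)+1, hi⟩, div_le_iff₀ hp]
        linarith
      · rw [hg i ω, dif_neg hi]
        rw [dif_neg hi] at hci
        rw [hξσ i]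
        exact hci
  -- put everything together
  have hdisj : Pairwise (Function.onFun Disjoint fun σ : Equiv.Perm (Fin m) => A σ) := by
    intro σ τ hst
    rw [Function.onFun, Set.disjoint_left]
    rintro t ⟨h1, h2, h3, _⟩ ⟨h1', h2', h3', _⟩
    apply hst
    have hmeq := Tuple.unique_monotone (f := t) (σ := σ) (τ := τ) h3 h3'
    exact Equiv.ext fun i => h2 (congrFun hmeq i)
  calc ℙ {ω | ∀ i, g i ω ≤ x i}
      = ℙ (Z ⁻¹' ⋃ σ : Equiv.Perm (Fin m), A σ) := measure_congr hEA
    _ = piν m (⋃ σ : Equiv.Perm (Fin m), A σ) := by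
        rw [← hmapZ, Measure.map_apply hZmeas (MeasurableSet.iUnion fun σ => hAmeas σ)]
    _ = ∑' σ : Equiv.Perm (Fin m), piν m (A σ) := measure_iUnion hdisj hAmeas
    _ = ∑ σ : Equiv.Perm (Fin m), piν m (A σ) := tsum_fintype _
    _ = (Nat.factorial m) * ENNReal.ofReal ((∏ i, x i ^ ((i:ℕ)+1)) / (Nat.factorial m)) := by
        rw [Finset.sum_congr rfl fun σ _ => (hνA σ).trans (hνA1R.trans hνR),
          Finset.sum_const, Finset.card_univ, Fintype.card_perm, Fintype.card_fin,
          nsmul_eq_mul]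
    _ = ∏ i, ENNReal.ofReal (x i ^ ((i : ℕ) + 1)) := by
        rw [← ENNReal.ofReal_natCast (Nat.factorial m),
          ← ENNReal.ofReal_mul (by positivity),
          show (Nat.factorial m : ℝ) * ((∏ i, x i ^ ((i:ℕ)+1)) / (Nat.factorial m))
            = ∏ i, x i ^ ((i:ℕ)+1) from by
              field_simp]
        exact ENNReal.ofReal_prod_of_nonneg fun i _ => pow_nonneg (hx0 i) _

end OrdStatAux

open OrdStatAux


/-- independence of successive ratios of order statistics for uniform
variables. Let `ξ₁ ≤ ⋯ ≤ ξ_m` be the order statistics of `m` independent random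
variables uniformly distributed on `[0,1]`. Then the ratios `η_i = ξ_i / ξ_{i+1}`
(`i = 1, …, m−1`) together with `ξ_m` are mutually independent, and `η_i` has CDF
`x ↦ x^i` on `[0,1]` (density proportional to `x^{i-1}`). -/
theorem ratios_of_order_statistics_uniform
    {Ω : Type*} [MeasureSpace Ω] [IsProbabilityMeasure (ℙ : Measure Ω)]
    (m : ℕ) (hm : 0 < m)
    (ζ : Fin m → Ω → ℝ) (hζmeas : ∀ i, Measurable (ζ i))
    (hζindep : iIndepFun ζ ℙ)
    (hζunif : ∀ i, Measure.map (ζ i) ℙ = (volume : Measure ℝ).restrict (Set.Icc (0 : ℝ) 1))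
    -- `ξ` is the family of order statistics of `ζ`: pointwise a monotone
    -- rearrangement of the `ζ`'s
    (ξ : Fin m → Ω → ℝ) (hξmeas : ∀ i, Measurable (ξ i))
    (hξsort : ∀ᵐ ω ∂(ℙ : Measure Ω), Monotone (fun i => ξ i ω) ∧
      ∃ σ : Equiv.Perm (Fin m), ∀ i, ξ i ω = ζ (σ i) ω)
    -- the combined family: `g i = η_{i+1} = ξ_i / ξ_{i+1}` for `i + 1 < m`, and
    -- `g (m-1) = ξ_m`, the last order statistic
    (g : Fin m → Ω → ℝ)
    (hg : ∀ (i : Fin m) ω, g i ω =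
      if h : (i : ℕ) + 1 < m then ξ i ω / ξ ⟨(i : ℕ) + 1, h⟩ ω else ξ i ω) :
    iIndepFun g ℙ ∧
      ∀ (i : Fin m), (i : ℕ) + 1 < m → ∀ x ∈ Set.Icc (0 : ℝ) 1,
        ℙ {ω | g i ω ≤ x} = ENNReal.ofReal (x ^ ((i : ℕ) + 1)) := by
  classical
  have hgmeas : ∀ i, Measurable (g i) := by
    intro i
    have hgi : g i = fun ω =>
        if h : (i:ℕ)+1 < m then ξ i ω / ξ ⟨(i:ℕ)+1, h⟩ ω else ξ i ω := funext (hg i)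
    rw [hgi]
    by_cases h : (i:ℕ)+1 < m
    · simp only [dif_pos h]
      exact (hξmeas i).div (hξmeas _)
    · simp only [dif_neg h]
      exact hξmeas i
  -- a.s. bounds on the `g i`
  have h1 : ∀ i : Fin m, ∀ᵐ ω ∂(ℙ : Measure Ω), 0 < ζ i ω := by
    intro i
    rw [ae_iff]
    have hset : {ω | ¬ 0 < ζ i ω} = ζ i ⁻¹' (Set.Iic 0) := by ext ω; simp [not_lt]
    rw [hset, ← Measure.map_apply (hζmeas i) measurableSet_Iic, hζunif i]
    exact unifμ_Iic_zero
  have h2 : ∀ i : Fin m, ∀ᵐ ω ∂(ℙ : Measure Ω), ζ i ω ≤ 1 := by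
    intro i
    rw [ae_iff]
    have hset : {ω | ¬ ζ i ω ≤ 1} = ζ i ⁻¹' (Set.Ioi 1) := by ext ω; simp [not_le]
    rw [hset, ← Measure.map_apply (hζmeas i) measurableSet_Ioi, hζunif i]
    exact unifμ_Ioi_one
  have hb : ∀ᵐ ω ∂(ℙ : Measure Ω), ∀ j : Fin m, 0 < g j ω ∧ g j ω ≤ 1 := by
    filter_upwards [ae_all_iff.2 h1, ae_all_iff.2 h2, hξsort] with ω ha hb' hs
    obtain ⟨hmono, τ, hτ⟩ := hs
    intro j
    have hξpos : ∀ k : Fin m, 0 < ξ k ω := fun k => by rw [hτ k]; exact ha _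
    have hξle1 : ∀ k : Fin m, ξ k ω ≤ 1 := fun k => by rw [hτ k]; exact hb' _
    rw [hg j ω]
    by_cases hj : (j:ℕ)+1 < m
    · rw [dif_pos hj]
      have hmle : ξ j ω ≤ ξ ⟨(j:ℕ)+1, hj⟩ ω := by
        apply hmono
        rw [Fin.le_def]
        simp only [Fin.val_mk]
        omega
      exact ⟨div_pos (hξpos j) (hξpos _), (div_le_one (hξpos _)).2 hmle⟩
    · rw [dif_neg hj]
      exact ⟨hξpos j, hξle1 j⟩
  -- the marginal distributions, via the key joint computation
  have marginal : ∀ (i : Fin m) (c : ℝ), 0 ≤ c →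
      ℙ {ω | g i ω ≤ c} = ENNReal.ofReal ((min c 1) ^ ((i:ℕ)+1)) := by
    intro i c hc
    set x' : Fin m → ℝ := Function.update (fun _ => (1:ℝ)) i (min c 1) with hx'
    have hx'mem : ∀ j, x' j ∈ Set.Icc (0:ℝ) 1 := by
      intro j
      by_cases hj : j = i
      · subst hj
        rw [hx', Function.update_self]
        exact ⟨le_min hc zero_le_one, min_le_right _ _⟩
      · rw [hx', Function.update_of_ne hj]
        exact ⟨zero_le_one, le_rfl⟩
    have hkey := key m hm ζ hζmeas hζindep hζunif ξ hξsort g hg x' hx'mem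
    have hsets : {ω | ∀ j, g j ω ≤ x' j} =ᵐ[(ℙ : Measure Ω)] {ω | g i ω ≤ c} := by
      rw [Filter.eventuallyEq_set]
      filter_upwards [hb] with ω hbω
      show (∀ j, g j ω ≤ x' j) ↔ g i ω ≤ c
      constructor
      · intro h
        have hi := h i
        rw [hx', Function.update_self] at hi
        exact hi.trans (min_le_left _ _)
      · intro h j
        by_cases hj : j = i
        · subst hj
          rw [hx', Function.update_self]
          exact le_min h (hbω j).2
        · rw [hx', Function.update_of_ne hj]
          exact (hbω j).2
    rw [← measure_congr hsets, hkey]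
    rw [Finset.prod_eq_single i (fun j _ hj => by rw [hx', Function.update_of_ne hj]; simp)
      (fun h => absurd (Finset.mem_univ i) h)]
    rw [hx', Function.update_self]
  have marginal_neg : ∀ (i : Fin m) (c : ℝ), c < 0 → ℙ {ω | g i ω ≤ c} = 0 := by
    intro i c hc
    have hae : ∀ᵐ ω ∂(ℙ : Measure Ω), ¬ (g i ω ≤ c) := by
      filter_upwards [hb] with ω h
      intro hle
      exact absurd ((h i).1.trans_le (hle.trans hc.le)) (lt_irrefl 0)
    have h0 := ae_iff.mp hae
    have hseteq : {a : Ω | ¬¬(g i a ≤ c)} = {ω : Ω | g i ω ≤ c} := by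
      ext ω; simp [not_not]
    rwa [hseteq] at h0
  constructor
  · -- independence
    rw [iIndepFun_iff_iIndep]
    set π : Fin m → Set (Set Ω) := fun i => (Set.preimage (g i)) '' (Set.range Set.Iic)
      with hπ
    refine ProbabilityTheory.iIndepSets.iIndep (fun i => (hgmeas i).comap_le) π
      (fun i => ?_) (fun i => ?_) ?_
    · -- π-system
      rintro s ⟨S, ⟨a, rfl⟩, rfl⟩ t ⟨T, ⟨b, rfl⟩, rfl⟩ _
      refine ⟨Set.Iic (min a b), ⟨min a b, rfl⟩, ?_⟩
      rw [← Set.preimage_inter, Set.Iic_inter_Iic]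
    · -- generation
      have hbor : (inferInstance : MeasurableSpace ℝ)
          = MeasurableSpace.generateFrom (Set.range Set.Iic) := by
        rw [BorelSpace.measurable_eq (α := ℝ), borel_eq_generateFrom_Iic]
      conv_lhs => rw [show Real.measurableSpace = MeasurableSpace.generateFrom (Set.range Set.Iic) from hbor]
      rw [MeasurableSpace.comap_generateFrom]
    · -- the product formula on the π-systems
      rw [iIndepSets_iff]
      intro s f' hf'
      have hchoice : ∀ i ∈ s, ∃ a : ℝ, f' i = g i ⁻¹' Set.Iic a := by
        intro i hi
        obtain ⟨S, ⟨a, rfl⟩, h⟩ := hf' i hi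
        exact ⟨a, h.symm⟩
      set c : Fin m → ℝ := fun i => if h : i ∈ s then (hchoice i h).choose else 1 with hcdef
      have hfc : ∀ i ∈ s, f' i = g i ⁻¹' Set.Iic (c i) := by
        intro i hi
        rw [hcdef]
        simp only [dif_pos hi]
        exact (hchoice i hi).choose_spec
      by_cases hneg : ∃ i ∈ s, c i < 0
      · obtain ⟨i, hi, hci⟩ := hneg
        have hzero : ℙ (f' i) = 0 := by
          rw [hfc i hi]
          exact marginal_neg i (c i) hci
        rw [Finset.prod_eq_zero hi hzero]
        exact measure_mono_null (Set.biInter_subset_of_mem hi) hzero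
      · push_neg at hneg
        set x' : Fin m → ℝ := fun j => if j ∈ s then min (c j) 1 else 1 with hx'
        have hx'mem : ∀ j, x' j ∈ Set.Icc (0:ℝ) 1 := by
          intro j
          simp only [hx']
          split_ifs with hj
          · exact ⟨le_min (hneg j hj) zero_le_one, min_le_right _ _⟩
          · exact ⟨zero_le_one, le_rfl⟩
        have hkey := key m hm ζ hζmeas hζindep hζunif ξ hξsort g hg x' hx'mem
        have hsets : (⋂ j ∈ s, f' j) =ᵐ[(ℙ : Measure Ω)] {ω | ∀ j, g j ω ≤ x' j} := by
          rw [Filter.eventuallyEq_set]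
          filter_upwards [hb] with ω hbω
          simp only [Set.mem_iInter, Set.mem_setOf_eq]
          constructor
          · intro h j
            simp only [hx']
            split_ifs with hj
            · have := h j hj
              rw [hfc j hj] at this
              exact le_min this (hbω j).2
            · exact (hbω j).2
          · intro h j hj
            rw [hfc j hj]
            have := h j
            rw [hx'] at this
            simp only [if_pos hj] at this
            exact Set.mem_preimage.2 (Set.mem_Iic.2 (this.trans (min_le_left _ _)))
        have hRHS : ∀ i ∈ s, ℙ (f' i) = ENNReal.ofReal (x' i ^ ((i:ℕ)+1)) := by
          intro i hi
          rw [hfc i hi]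
          have := marginal i (c i) (hneg i hi)
          rw [show g i ⁻¹' Set.Iic (c i) = {ω | g i ω ≤ c i} from rfl, this, hx']
          simp only [if_pos hi]
        calc ℙ (⋂ j ∈ s, f' j)
            = ℙ {ω | ∀ j, g j ω ≤ x' j} := measure_congr hsets
          _ = ∏ j, ENNReal.ofReal (x' j ^ ((j:ℕ)+1)) := hkey
          _ = ∏ j ∈ s, ENNReal.ofReal (x' j ^ ((j:ℕ)+1)) := by
              refine (Finset.prod_subset (Finset.subset_univ s) ?_).symm
              intro j _ hj
              rw [hx']
              simp [hj]
          _ = ∏ j ∈ s, ℙ (f' j) := Finset.prod_congr rfl fun i hi => (hRHS i hi).symm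
  · -- marginal CDFs
    intro i _ x hx
    rw [marginal i x hx.1, min_eq_left hx.2]
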